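/- Let L ≥ 1 be an integer, η ∈ ℂ, let x₁,…,x_L and z₁,…,z_L be complex numbers with sinh(x_i − z_ℓ) ≠ 0 and sinh(x_i − z_k − η) ≠ 0 for all i, k, ℓ, and let f : ℂ → ℂ be any function. Define E(u) = ∏_{ℓ=1}^L sinh(u − z_ℓ − η)/sinh(u − z_ℓ). Then det_{1≤i,j≤L} [ e^{(2j−L−1)x_i}/2^{j−1} − f(x_i)·e^{(2j−L−1)(x_i−η)}/2^{j−1} ] · ∏_{1≤i<j≤L} sinh(z_i − z_j) = ∏_{i,ℓ=1}^L sinh(x_i − z_ℓ) · det_{1≤i,k≤L} [ 1/sinh(x_i − z_k) − f(x_i)·E(x_i)/sinh(x_i − z_k − η) ]. -/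

import Mathlib

open Complex Finset


lemma sinh_sub_eq (a b : ℂ) :
    Complex.sinh (a - b) = (Complex.exp (2*a) - Complex.exp (2*b)) * Complex.exp (-(a+b)) / 2 := by
  have e1 : Complex.exp (2*a) * Complex.exp (-(a+b)) = Complex.exp (a-b) := by
    rw [← Complex.exp_add]; congr 1; ring
  have e2 : Complex.exp (2*b) * Complex.exp (-(a+b)) = Complex.exp (b-a) := by
    rw [← Complex.exp_add]; congr 1; ring
  rw [Complex.sinh, show -(a-b) = b-a by ring]
  linear_combination (e2 - e1)/2

lemma sum_swap_Ioi {L : ℕ} (p : Fin L → Fin L → ℂ) :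
    ∑ i : Fin L, ∑ j ∈ Ioi i, p i j = ∑ j : Fin L, ∑ i ∈ Iio j, p i j :=
  Finset.sum_comm' (by intro i j; simp [Finset.mem_Ioi, Finset.mem_Iio])

lemma prod_swap_Ioi {L : ℕ} (p : Fin L → Fin L → ℂ) :
    ∏ i : Fin L, ∏ j ∈ Ioi i, p i j = ∏ j : Fin L, ∏ i ∈ Iio j, p i j :=
  Finset.prod_comm' (by intro i j; simp [Finset.mem_Ioi, Finset.mem_Iio])

lemma vandermonde_sinh {L : ℕ} (y : Fin L → ℂ) :
    Matrix.det (Matrix.of fun i j : Fin L =>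
      Complex.exp ((2 * ((j:ℕ):ℂ) + 1 - (L:ℂ)) * y i) / 2 ^ (j:ℕ)) =
    ∏ i : Fin L, ∏ j ∈ Ioi i, Complex.sinh (y j - y i) := by
  have entry : ∀ i j : Fin L,
      Complex.exp ((2 * ((j:ℕ):ℂ) + 1 - (L:ℂ)) * y i) / 2 ^ (j:ℕ)
        = ((2:ℂ)⁻¹)^(j:ℕ) * ((Matrix.of fun i j : Fin L =>
            Complex.exp ((1 - (L:ℂ)) * y i) * Matrix.vandermonde (fun m => Complex.exp (2 * y m)) i j) i j) := by
    intro i j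
    have : Complex.exp ((2 * ((j:ℕ):ℂ) + 1 - (L:ℂ)) * y i)
        = Complex.exp ((1 - (L:ℂ)) * y i) * Complex.exp (2 * y i) ^ (j:ℕ) := by
      rw [← Complex.exp_nat_mul, ← Complex.exp_add]; congr 1; ring
    simp only [Matrix.of_apply, Matrix.vandermonde_apply, this, inv_pow]
    ring
  have step1 : Matrix.det (Matrix.of fun i j : Fin L =>
      Complex.exp ((2 * ((j:ℕ):ℂ) + 1 - (L:ℂ)) * y i) / 2 ^ (j:ℕ))
      = (∏ j : Fin L, ((2:ℂ)⁻¹)^(j:ℕ)) *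
        ((∏ i : Fin L, Complex.exp ((1 - (L:ℂ)) * y i)) *
          Matrix.det (Matrix.vandermonde (fun m => Complex.exp (2 * y m)))) := by
    rw [show (Matrix.of fun i j : Fin L =>
      Complex.exp ((2 * ((j:ℕ):ℂ) + 1 - (L:ℂ)) * y i) / 2 ^ (j:ℕ))
      = Matrix.of (fun i j : Fin L => ((2:ℂ)⁻¹)^(j:ℕ) * ((Matrix.of fun i j : Fin L =>
            Complex.exp ((1 - (L:ℂ)) * y i) * Matrix.vandermonde (fun m => Complex.exp (2 * y m)) i j) i j))
        from by ext i j; exact entry i j]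
    rw [Matrix.det_mul_row, Matrix.det_mul_column]
  rw [step1, Matrix.det_vandermonde]
  -- now rewrite RHS of the goal
  have sinh_rw : ∀ i : Fin L, ∀ j ∈ Ioi i, Complex.sinh (y j - y i)
      = (Complex.exp (2 * y j) - Complex.exp (2 * y i)) * (Complex.exp (-(y j + y i)) * (2:ℂ)⁻¹) := by
    intro i j _
    rw [sinh_sub_eq]; ring
  rw [Finset.prod_congr rfl (fun i _ => Finset.prod_congr rfl (sinh_rw i))]
  simp only [Finset.prod_mul_distrib]
  -- group:  goal : c * (e * V) = V' * (E' * C')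
  have hpow : ∏ i : Fin L, ∏ _j ∈ Ioi i, (2:ℂ)⁻¹ = ∏ j : Fin L, ((2:ℂ)⁻¹)^(j:ℕ) := by
    rw [prod_swap_Ioi (fun _ _ => (2:ℂ)⁻¹)]
    exact Finset.prod_congr rfl (fun j _ => by rw [Finset.prod_const, Fin.card_Iio])
  have hexp : ∏ i : Fin L, ∏ j ∈ Ioi i, Complex.exp (-(y j + y i))
      = ∏ i : Fin L, Complex.exp ((1 - (L:ℂ)) * y i) := by
    rw [Finset.prod_congr rfl (fun i (_ : i ∈ univ) => (Complex.exp_sum (Ioi i) (fun j => -(y j + y i))).symm),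
      ← Complex.exp_sum, ← Complex.exp_sum]
    congr 1
    have split : ∑ i : Fin L, ∑ j ∈ Ioi i, (-(y j + y i))
        = -((∑ i : Fin L, ∑ j ∈ Ioi i, y j) + ∑ i : Fin L, ∑ j ∈ Ioi i, y i) := by
      rw [← Finset.sum_add_distrib, ← Finset.sum_neg_distrib]
      exact Finset.sum_congr rfl fun i _ => by rw [← Finset.sum_add_distrib, ← Finset.sum_neg_distrib]
    rw [split, sum_swap_Ioi (fun _ j => y j)]
    have c1 : ∀ j : Fin L, ∑ i ∈ Iio j, y j = ((j:ℕ):ℂ) * y j := by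
      intro j; rw [Finset.sum_const, Fin.card_Iio, nsmul_eq_mul]
    have c2 : ∀ i : Fin L, ∑ j ∈ Ioi i, y i = ((L - 1 - (i:ℕ) : ℕ):ℂ) * y i := by
      intro i; rw [Finset.sum_const, Fin.card_Ioi, nsmul_eq_mul]
    rw [Finset.sum_congr rfl (fun j _ => c1 j), Finset.sum_congr rfl (fun i _ => c2 i),
      ← Finset.sum_add_distrib, ← Finset.sum_neg_distrib]
    refine Finset.sum_congr rfl fun i _ => ?_
    have hi := i.is_lt
    have hc : ((L - 1 - (i:ℕ) : ℕ):ℂ) = (L:ℂ) - 1 - ((i:ℕ):ℂ) := by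
      rw [Nat.cast_sub (by omega), Nat.cast_sub (by omega)]; push_cast; ring
    rw [hc]; ring
  rw [hpow, hexp]
  ring


noncomputable def Cmat (L : ℕ) (z : Fin L → ℂ) (j k : Fin L) : ℂ :=
  2^(j:ℕ) * (-1:ℂ)^(L-1-(j:ℕ)) / 2^(L-1) *
    ∑ t ∈ Finset.powersetCard (j:ℕ) (Finset.univ.erase k),
      Complex.exp ((∑ l ∈ (Finset.univ.erase k) \ t, z l) - ∑ l ∈ t, z l)

lemma expansion {L : ℕ} (hL : 1 ≤ L) (z : Fin L → ℂ) (u : ℂ) (k : Fin L) :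
    ∏ l ∈ Finset.univ.erase k, Complex.sinh (u - z l)
      = ∑ j : Fin L, Complex.exp ((2 * ((j:ℕ):ℂ) + 1 - (L:ℂ)) * u) / 2 ^ (j:ℕ) * Cmat L z j k := by
  classical
  set s : Finset (Fin L) := Finset.univ.erase k with hs_def
  have hscard : s.card = L - 1 := by
    rw [hs_def, Finset.card_erase_of_mem (Finset.mem_univ k), Finset.card_univ, Fintype.card_fin]
  -- step A: product of sinh as sum over powerset
  have hfact : ∀ l : Fin L, Complex.sinh (u - z l)
      = (Complex.exp u * Complex.exp (-z l) + -(Complex.exp (-u) * Complex.exp (z l))) * 2⁻¹ := by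
    intro l
    rw [Complex.sinh, show -(u - z l) = -u + z l by ring, show u - z l = u + -z l by ring,
      Complex.exp_add, Complex.exp_add]
    ring
  have stepA : ∏ l ∈ s, Complex.sinh (u - z l)
      = (∑ t ∈ s.powerset,
          (∏ l ∈ t, Complex.exp u * Complex.exp (-z l)) *
            ∏ l ∈ s \ t, -(Complex.exp (-u) * Complex.exp (z l))) * (2:ℂ)⁻¹ ^ (L-1) := by
    rw [Finset.prod_congr rfl (fun l _ => hfact l), Finset.prod_mul_distrib,
      Finset.prod_const, hscard, Finset.prod_add]
  -- step B: evaluate each term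
  have termeq : ∀ t ∈ s.powerset,
      (∏ l ∈ t, Complex.exp u * Complex.exp (-z l)) *
          (∏ l ∈ s \ t, -(Complex.exp (-u) * Complex.exp (z l))) * (2:ℂ)⁻¹ ^ (L-1)
      = Complex.exp ((2 * (t.card:ℂ) + 1 - (L:ℂ)) * u) *
          ((-1:ℂ)^(L-1-t.card) / 2^(L-1) *
            Complex.exp ((∑ l ∈ s \ t, z l) - ∑ l ∈ t, z l)) := by
    intro t ht
    rw [Finset.mem_powerset] at ht
    have hcard : (s \ t).card = L - 1 - t.card := by
      rw [Finset.card_sdiff_of_subset ht, hscard]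
    have htle : t.card ≤ L - 1 := hscard ▸ Finset.card_le_card ht
    have e1 : ∏ l ∈ t, Complex.exp u * Complex.exp (-z l)
        = Complex.exp u ^ t.card * Complex.exp (-∑ l ∈ t, z l) := by
      rw [Finset.prod_mul_distrib, Finset.prod_const, ← Complex.exp_sum, ← Finset.sum_neg_distrib]
    have e2 : ∏ l ∈ s \ t, -(Complex.exp (-u) * Complex.exp (z l))
        = (-1:ℂ)^(L-1-t.card) * (Complex.exp (-u) ^ (L-1-t.card) * Complex.exp (∑ l ∈ s \ t, z l)) := by
      rw [show (fun l => -(Complex.exp (-u) * Complex.exp (z l)))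
          = (fun l => (-1) * (Complex.exp (-u) * Complex.exp (z l))) from by funext l; ring]
      rw [Finset.prod_mul_distrib, Finset.prod_const, Finset.prod_mul_distrib,
        Finset.prod_const, hcard, ← Complex.exp_sum]
    have e3 : Complex.exp u ^ t.card * Complex.exp (-u) ^ (L-1-t.card)
        = Complex.exp ((2 * (t.card:ℂ) + 1 - (L:ℂ)) * u) := by
      rw [← Complex.exp_nat_mul, ← Complex.exp_nat_mul, ← Complex.exp_add]
      congr 1
      rw [Nat.cast_sub htle, Nat.cast_sub (by omega : 1 ≤ L)]
      push_cast
      ring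
    have e4 : Complex.exp ((∑ l ∈ s \ t, z l) - ∑ l ∈ t, z l)
        = Complex.exp (∑ l ∈ s \ t, z l) * Complex.exp (-∑ l ∈ t, z l) := by
      rw [sub_eq_add_neg, Complex.exp_add]
    rw [e1, e2, e4, ← e3]
    rw [show ((2:ℂ)⁻¹ ^ (L-1)) = ((2:ℂ)^(L-1))⁻¹ by rw [inv_pow]]
    field_simp
  rw [stepA, Finset.sum_mul, Finset.sum_congr rfl termeq, Finset.sum_powerset, hscard,
    Nat.sub_add_cancel hL]
  simp only [Cmat]
  rw [show (∑ j : Fin L, Complex.exp ((2 * ((j:ℕ):ℂ) + 1 - (L:ℂ)) * u) / 2 ^ (j:ℕ) *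
      (2^(j:ℕ) * (-1:ℂ)^(L-1-(j:ℕ)) / 2^(L-1) *
        ∑ t ∈ Finset.powersetCard (j:ℕ) (Finset.univ.erase k),
          Complex.exp ((∑ l ∈ (Finset.univ.erase k) \ t, z l) - ∑ l ∈ t, z l)))
    = ∑ n ∈ Finset.range L, Complex.exp ((2 * (n:ℂ) + 1 - (L:ℂ)) * u) / 2 ^ n *
      (2^n * (-1:ℂ)^(L-1-n) / 2^(L-1) *
        ∑ t ∈ Finset.powersetCard n (Finset.univ.erase k),
          Complex.exp ((∑ l ∈ (Finset.univ.erase k) \ t, z l) - ∑ l ∈ t, z l))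
    from Fin.sum_univ_eq_sum_range (fun n => Complex.exp ((2 * (n:ℂ) + 1 - (L:ℂ)) * u) / 2 ^ n *
      (2^n * (-1:ℂ)^(L-1-n) / 2^(L-1) *
        ∑ t ∈ Finset.powersetCard n (Finset.univ.erase k),
          Complex.exp ((∑ l ∈ (Finset.univ.erase k) \ t, z l) - ∑ l ∈ t, z l))) L]
  rw [← hs_def]
  refine Finset.sum_congr rfl fun n hn => ?_
  rw [Finset.mul_sum, Finset.mul_sum]
  refine Finset.sum_congr rfl fun t ht => ?_
  have hc : t.card = n := (Finset.mem_powersetCard.mp ht).2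
  rw [hc]
  have h2 : ((2:ℂ))^n ≠ 0 := pow_ne_zero _ two_ne_zero
  field_simp


lemma prod_swap_Ioi' {L : ℕ} (p : Fin L → Fin L → ℂ) :
    ∏ i : Fin L, ∏ j ∈ Ioi i, p i j = ∏ j : Fin L, ∏ i ∈ Iio j, p i j :=
  Finset.prod_comm' (by intro i j; simp [Finset.mem_Ioi, Finset.mem_Iio])

lemma erase_eq_Ioi_union_Iio {L : ℕ} (k : Fin L) :
    Finset.univ.erase k = Ioi k ∪ Iio k := by
  ext l
  simp only [Finset.mem_erase, Finset.mem_univ, and_true, Finset.mem_union,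
    Finset.mem_Ioi, Finset.mem_Iio]
  constructor
  · intro h; rcases lt_or_gt_of_ne h with h' | h'
    · exact Or.inr h'
    · exact Or.inl h'
  · rintro (h | h)
    · exact ne_of_gt h
    · exact ne_of_lt h

lemma pairprod {L : ℕ} (F : Fin L → Fin L → ℂ) :
    ∏ k : Fin L, ∏ l ∈ Finset.univ.erase k, F k l
      = (∏ i : Fin L, ∏ j ∈ Ioi i, F i j) * ∏ i : Fin L, ∏ j ∈ Ioi i, F j i := by
  have hdisj : ∀ k : Fin L, Disjoint (Ioi k) (Iio k) := by
    intro k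
    rw [Finset.disjoint_left]
    intro a ha hb
    exact absurd (Finset.mem_Iio.mp hb) (not_lt.mpr (le_of_lt (Finset.mem_Ioi.mp ha)))
  calc ∏ k : Fin L, ∏ l ∈ Finset.univ.erase k, F k l
      = ∏ k : Fin L, ((∏ l ∈ Ioi k, F k l) * ∏ l ∈ Iio k, F k l) := by
        refine Finset.prod_congr rfl fun k _ => ?_
        rw [erase_eq_Ioi_union_Iio, Finset.prod_union (hdisj k)]
    _ = (∏ k : Fin L, ∏ l ∈ Ioi k, F k l) * ∏ k : Fin L, ∏ l ∈ Iio k, F k l := by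
        rw [Finset.prod_mul_distrib]
    _ = (∏ i : Fin L, ∏ j ∈ Ioi i, F i j) * ∏ i : Fin L, ∏ j ∈ Ioi i, F j i := by
        rw [← prod_swap_Ioi' (fun i j => F j i)]

section Main

variable {L : ℕ}

/-- Cross-multiplied form of Identity 1 of the paper, relating a
generalized Vandermonde-type determinant to a generalized Izergin-type determinant. -/
theorem vandermonde_to_izergin (L : ℕ) (hL : 1 ≤ L) (η : ℂ) (x z : Fin L → ℂ)
    (f : ℂ → ℂ)
    (h1 : ∀ i l, Complex.sinh (x i - z l) ≠ 0)
    (h2 : ∀ i k, Complex.sinh (x i - z k - η) ≠ 0) :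
    Matrix.det (Matrix.of (fun i j : Fin L =>
        Complex.exp ((2 * ((j : ℕ) : ℂ) + 1 - (L : ℂ)) * x i) / 2 ^ (j : ℕ) -
          f (x i) *
            Complex.exp ((2 * ((j : ℕ) : ℂ) + 1 - (L : ℂ)) * (x i - η)) / 2 ^ (j : ℕ))) *
      (∏ i : Fin L, ∏ j ∈ Finset.Ioi i, Complex.sinh (z i - z j)) =
    (∏ i : Fin L, ∏ l : Fin L, Complex.sinh (x i - z l)) *
      Matrix.det (Matrix.of (fun i k : Fin L =>
        1 / Complex.sinh (x i - z k) -
          f (x i) * (∏ l, Complex.sinh (x i - z l - η) / Complex.sinh (x i - z l)) /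
            Complex.sinh (x i - z k - η))) := by
  classical
  -- notation
  set N : ℂ → Fin L → ℂ := fun u k => ∏ l ∈ Finset.univ.erase k, Complex.sinh (u - z l) with hN
  set A : Matrix (Fin L) (Fin L) ℂ := Matrix.of (fun i j : Fin L =>
        Complex.exp ((2 * ((j : ℕ) : ℂ) + 1 - (L : ℂ)) * x i) / 2 ^ (j : ℕ) -
          f (x i) *
            Complex.exp ((2 * ((j : ℕ) : ℂ) + 1 - (L : ℂ)) * (x i - η)) / 2 ^ (j : ℕ)) with hA
  set B : Matrix (Fin L) (Fin L) ℂ :=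
    Matrix.of (fun i k : Fin L => N (x i) k - f (x i) * N (x i - η) k) with hB
  set C : Matrix (Fin L) (Fin L) ℂ := Matrix.of (Cmat L z) with hC
  -- step 1 : RHS equals det B
  have hstep1 : (∏ i : Fin L, ∏ l : Fin L, Complex.sinh (x i - z l)) *
      Matrix.det (Matrix.of (fun i k : Fin L =>
        1 / Complex.sinh (x i - z k) -
          f (x i) * (∏ l, Complex.sinh (x i - z l - η) / Complex.sinh (x i - z l)) /
            Complex.sinh (x i - z k - η))) = Matrix.det B := by
    have hP : ∀ i : Fin L, (∏ l : Fin L, Complex.sinh (x i - z l)) ≠ 0 :=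
      fun i => Finset.prod_ne_zero_iff.mpr fun l _ => h1 i l
    have entry : ∀ i k : Fin L,
        1 / Complex.sinh (x i - z k) -
          f (x i) * (∏ l, Complex.sinh (x i - z l - η) / Complex.sinh (x i - z l)) /
            Complex.sinh (x i - z k - η)
        = (∏ l : Fin L, Complex.sinh (x i - z l))⁻¹ * B i k := by
      intro i k
      have hPk : (∏ l : Fin L, Complex.sinh (x i - z l))
          = Complex.sinh (x i - z k) * N (x i) k :=
        (Finset.mul_prod_erase Finset.univ _ (Finset.mem_univ k)).symm
      have hsub : ∀ l : Fin L, x i - z l - η = x i - η - z l := fun l => sub_right_comm _ _ _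
      have hQk : (∏ l : Fin L, Complex.sinh (x i - z l - η))
          = Complex.sinh (x i - z k - η) * N (x i - η) k := by
        rw [Finset.prod_congr rfl (fun l _ => by rw [hsub l]), hsub k]
        exact (Finset.mul_prod_erase Finset.univ _ (Finset.mem_univ k)).symm
      have hE : (∏ l, Complex.sinh (x i - z l - η) / Complex.sinh (x i - z l))
          = (∏ l, Complex.sinh (x i - z l - η)) / ∏ l, Complex.sinh (x i - z l) :=
        Finset.prod_div_distrib _ _
      rw [hE, hB]
      simp only [Matrix.of_apply]
      have ha := h1 i k
      have hb := h2 i k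
      have hPne := hP i
      field_simp
      rw [hPk, hQk]
      ring
    rw [show Matrix.of (fun i k : Fin L =>
        1 / Complex.sinh (x i - z k) -
          f (x i) * (∏ l, Complex.sinh (x i - z l - η) / Complex.sinh (x i - z l)) /
            Complex.sinh (x i - z k - η))
      = Matrix.of (fun i k : Fin L => (∏ l : Fin L, Complex.sinh (x i - z l))⁻¹ * B i k)
      from by ext i k; simp only [Matrix.of_apply]; exact entry i k]
    rw [Matrix.det_mul_column, ← mul_assoc, ← Finset.prod_mul_distrib]
    rw [Finset.prod_congr rfl (fun i (_ : i ∈ Finset.univ) =>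
      mul_inv_cancel₀ (hP i)), Finset.prod_const_one, one_mul]
  rw [hstep1]
  -- step 2 : B = A * C
  have hBAC : B = A * C := by
    ext i k
    rw [Matrix.mul_apply]
    simp only [hB, hA, hC, Matrix.of_apply]
    have expand : ∀ u : ℂ, N u k
        = ∑ j : Fin L, Complex.exp ((2 * ((j:ℕ):ℂ) + 1 - (L:ℂ)) * u) / 2 ^ (j:ℕ) * Cmat L z j k :=
      fun u => expansion hL z u k
    rw [expand (x i), expand (x i - η), Finset.mul_sum, ← Finset.sum_sub_distrib]
    refine Finset.sum_congr rfl fun j _ => ?_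
    ring
  by_cases hz : ∀ i : Fin L, ∀ j ∈ Ioi i, Complex.sinh (z i - z j) ≠ 0
  · -- nondegenerate case
    set V : Matrix (Fin L) (Fin L) ℂ := Matrix.of (fun m j : Fin L =>
      Complex.exp ((2 * ((j:ℕ):ℂ) + 1 - (L:ℂ)) * z m) / 2 ^ (j:ℕ)) with hV
    have hVC : V * C = Matrix.diagonal (fun k => ∏ l ∈ Finset.univ.erase k,
        Complex.sinh (z k - z l)) := by
      ext m k
      rw [Matrix.mul_apply]
      simp only [hV, hC, Matrix.of_apply]
      rw [← expansion hL z (z m) k, Matrix.diagonal_apply]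
      by_cases hmk : m = k
      · subst hmk; simp
      · simp only [hmk, if_false]
        refine Finset.prod_eq_zero (Finset.mem_erase.mpr ⟨hmk, Finset.mem_univ m⟩) ?_
        simp
    have hdetV : Matrix.det V = ∏ i : Fin L, ∏ j ∈ Ioi i, Complex.sinh (z j - z i) :=
      vandermonde_sinh z
    have hdetVne : Matrix.det V ≠ 0 := by
      rw [hdetV]
      refine Finset.prod_ne_zero_iff.mpr fun i _ => Finset.prod_ne_zero_iff.mpr fun j hj => ?_
      rw [show z j - z i = -(z i - z j) by ring, Complex.sinh_neg]
      exact neg_ne_zero.mpr (hz i j hj)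
    have hdetD : Matrix.det (V * C)
        = (∏ i : Fin L, ∏ j ∈ Ioi i, Complex.sinh (z i - z j)) *
          ∏ i : Fin L, ∏ j ∈ Ioi i, Complex.sinh (z j - z i) := by
      rw [hVC, Matrix.det_diagonal, pairprod (fun k l => Complex.sinh (z k - z l))]
    have hdetC : Matrix.det C = ∏ i : Fin L, ∏ j ∈ Ioi i, Complex.sinh (z i - z j) := by
      have := hdetD
      rw [Matrix.det_mul, hdetV] at this
      have hswap : (∏ i : Fin L, ∏ j ∈ Ioi i, Complex.sinh (z j - z i)) * Matrix.det C
          = (∏ i : Fin L, ∏ j ∈ Ioi i, Complex.sinh (z j - z i)) *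
            ∏ i : Fin L, ∏ j ∈ Ioi i, Complex.sinh (z i - z j) := by
        rw [this]; ring
      exact mul_left_cancel₀ (hdetV ▸ hdetVne) hswap
    rw [hBAC, Matrix.det_mul, hdetC]
  · -- degenerate case
    push_neg at hz
    obtain ⟨i, j, hij, h0⟩ := hz
    have hijne : i ≠ j := ne_of_lt (Finset.mem_Ioi.mp hij)
    have hLHS : (∏ i : Fin L, ∏ j ∈ Finset.Ioi i, Complex.sinh (z i - z j)) = 0 :=
      Finset.prod_eq_zero (Finset.mem_univ i) (Finset.prod_eq_zero hij h0)
    rw [hLHS, mul_zero]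
    -- columns i and j of B are proportional
    set c : ℂ := Complex.cosh (z i - z j) with hc
    have key : ∀ u : ℂ, N u i = c * N u j := by
      intro u
      have hji : j ∈ Finset.univ.erase i := Finset.mem_erase.mpr ⟨hijne.symm, Finset.mem_univ j⟩
      have hij2 : i ∈ Finset.univ.erase j := Finset.mem_erase.mpr ⟨hijne, Finset.mem_univ i⟩
      have hsinh : Complex.sinh (u - z j) = c * Complex.sinh (u - z i) := by
        rw [show u - z j = (u - z i) + (z i - z j) by ring, Complex.sinh_add, h0, hc]
        ring
      calc N u i = Complex.sinh (u - z j) * ∏ l ∈ (Finset.univ.erase i).erase j,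
            Complex.sinh (u - z l) := (Finset.mul_prod_erase _ _ hji).symm
        _ = c * (Complex.sinh (u - z i) * ∏ l ∈ (Finset.univ.erase j).erase i,
            Complex.sinh (u - z l)) := by
            have hset : (Finset.univ.erase i).erase j = (Finset.univ.erase j).erase i :=
              Finset.erase_right_comm
            rw [hsinh]
            rw [hset]
            ring
        _ = c * N u j := by
            rw [hN]; congr 1
            exact Finset.mul_prod_erase (Finset.univ.erase j) (fun l => Complex.sinh (u - z l)) hij2
    have hcol : ∀ m : Fin L, B m i = c * B m j := by
      intro m
      simp only [hB, Matrix.of_apply, key (x m), key (x m - η)]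
      ring
    have hdetB : Matrix.det B = 0 := by
      have hupd : B.updateCol i (c • fun m => B m j) = B := by
        ext m k
        rw [Matrix.updateCol_apply]
        by_cases hk : k = i
        · subst hk; simp only [if_true, Pi.smul_apply, smul_eq_mul]; exact (hcol m).symm
        · simp [hk]
      calc Matrix.det B = Matrix.det (B.updateCol i (c • fun m => B m j)) := by rw [hupd]
        _ = c * Matrix.det (B.updateCol i fun m => B m j) :=
            Matrix.det_updateCol_smul B i c _
        _ = c * 0 := by rw [Matrix.det_updateCol_eq_zero hijne.symm]
        _ = 0 := mul_zero c
    rw [hdetB]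

end Main
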